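/- For any nonnegative integer d and every q ∈ (0,1), ζ[2, {1}^{d+1} : q] < ζ[2, {1}^d : q], where {1}^d denotes d repeated entries equal to 1. -/

import Mathlib

open Finset Filter

/-- The q-integer [m:q] = (1-q^m)/(1-q). -/
noncomputable def qint (q : ℝ) (m : ℕ) : ℝ := (1 - q ^ m) / (1 - q)

/-- Tail of the multiple q-zeta value: sum over m₁ > ⋯ > m_d > n. -/
noncomputable def qZeta {d : ℕ} (q : ℝ) (k : Fin d → ℕ) (n : ℕ) : ℝ :=
  ∑' m : {m : Fin d → ℕ // StrictAnti m ∧ ∀ i, n < m i},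
    ∏ i, q ^ (m.1 i * (k i - 1)) / (qint q (m.1 i)) ^ (k i)

/-- The modified multiple q-zeta value ζ[k₁,…,k_d; r : q). -/
noncomputable def qZetaR {d : ℕ} (q : ℝ) (k : Fin d → ℕ) (r : ℕ) : ℝ :=
  ∑' m : {m : Fin (d + 1) → ℕ // StrictAnti m ∧ ∀ i, 0 < m i},
    (∏ i : Fin d, q ^ (m.1 i.castSucc * (k i - 1)) / (qint q (m.1 i.castSucc)) ^ (k i))
      / (m.1 (Fin.last d) : ℝ) ^ r

/-- Multiple zeta value. -/
noncomputable def mzv {d : ℕ} (k : Fin d → ℕ) : ℝ :=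
  ∑' m : {m : Fin d → ℕ // StrictAnti m ∧ ∀ i, 0 < m i},
    ∏ i, (1 : ℝ) / (m.1 i : ℝ) ^ (k i)

/-- Akhilesh's double tail of a multiple zeta value. -/
noncomputable def dtail {d : ℕ} (hd : 0 < d) (k : Fin d → ℕ) (p n : ℕ) : ℝ :=
  ∑' m : {m : Fin d → ℕ // StrictAnti m ∧ ∀ i, n < m i},
    ((Nat.choose (m.1 ⟨0, hd⟩ + p) p : ℝ))⁻¹ * ∏ i, (1 : ℝ) / (m.1 i : ℝ) ^ (k i)


section AUX

lemma qint_pos {q : ℝ} (hq0 : 0 < q) (hq1 : q < 1) {m : ℕ} (hm : 0 < m) : 0 < qint q m := by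
  have h1 : q ^ m < 1 := pow_lt_one₀ hq0.le hq1 hm.ne'
  exact div_pos (by linarith) (by linarith)

lemma one_le_qint {q : ℝ} (hq0 : 0 < q) (hq1 : q < 1) {m : ℕ} (hm : 0 < m) : 1 ≤ qint q m := by
  have h1 : q ^ m ≤ q ^ 1 := pow_le_pow_of_le_one hq0.le hq1.le hm
  rw [qint, le_div_iff₀ (by linarith : (0:ℝ) < 1 - q)]
  simp only [pow_one] at h1
  linarith

lemma qint_succ {q : ℝ} (hq1 : q < 1) (n : ℕ) : qint q (n+1) = q * qint q n + 1 := by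
  have h : (1:ℝ) - q ≠ 0 := by intro h; nlinarith
  unfold qint
  field_simp
  ring

noncomputable def aa (q : ℝ) (n : ℕ) : ℝ := q ^ n / qint q n
noncomputable def bb (q : ℝ) (n : ℕ) : ℝ := q ^ n / (qint q n) ^ 2

lemma bb_nonneg {q : ℝ} (hq0 : 0 < q) (n : ℕ) : 0 ≤ bb q n :=
  div_nonneg (pow_nonneg hq0.le n) (sq_nonneg _)

lemma aa_nonneg {q : ℝ} (hq0 : 0 < q) (hq1 : q < 1) (n : ℕ) : 0 ≤ aa q n := by
  rcases Nat.eq_zero_or_pos n with h | h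
  · subst h; simp [aa, qint]
  · exact le_of_lt (div_pos (pow_pos hq0 n) (qint_pos hq0 hq1 h))

lemma key_lt {q : ℝ} (hq0 : 0 < q) (hq1 : q < 1) {n : ℕ} (hn : 0 < n) :
    bb q (n+1) < aa q n - aa q (n+1) := by
  have hQn : 0 < qint q n := qint_pos hq0 hq1 hn
  have hQn1 : 0 < qint q (n+1) := qint_pos hq0 hq1 (Nat.succ_pos n)
  have hs : qint q (n+1) = q * qint q n + 1 := qint_succ hq1 n
  have hdiff : aa q n - aa q (n+1) = q ^ n / (qint q n * qint q (n+1)) := by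
    unfold aa
    rw [div_sub_div _ _ hQn.ne' hQn1.ne']
    congr 1
    rw [hs]; ring
  rw [hdiff, bb, div_lt_div_iff₀ (by positivity) (by positivity)]
  have hqp : 0 < q ^ n := pow_pos hq0 n
  have h1 : q * qint q n < qint q (n+1) := by rw [hs]; linarith
  calc q ^ (n+1) * (qint q n * qint q (n+1))
      = (q * qint q n) * (q ^ n * qint q (n+1)) := by ring
    _ < qint q (n+1) * (q ^ n * qint q (n+1)) := by
        exact mul_lt_mul_of_pos_right h1 (by positivity)
    _ = q ^ n * qint q (n+1) ^ 2 := by ring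

lemma sum_range_le {q : ℝ} (hq0 : 0 < q) (hq1 : q < 1) {n : ℕ} (hn : 0 < n) (N : ℕ) :
    ∑ k ∈ Finset.range N, bb q (n+1+k) ≤ aa q n := by
  have h1 : ∑ k ∈ Finset.range N, (aa q (n+k) - aa q (n+k+1)) = aa q n - aa q (n+N) := by
    have := Finset.sum_range_sub' (fun k => aa q (n+k)) N
    simpa [add_assoc] using this
  have h2 : ∑ k ∈ Finset.range N, bb q (n+1+k)
      ≤ ∑ k ∈ Finset.range N, (aa q (n+k) - aa q (n+k+1)) := by
    apply Finset.sum_le_sum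
    intro k _
    have := (key_lt hq0 hq1 (n := n+k) (by omega)).le
    have he : n+1+k = n+k+1 := by omega
    rw [he]
    exact this
  have h3 : 0 ≤ aa q (n+N) := aa_nonneg hq0 hq1 _
  linarith

lemma bb_summable {q : ℝ} (hq0 : 0 < q) (hq1 : q < 1) {n : ℕ} (hn : 0 < n) :
    Summable (fun k => bb q (n+1+k)) :=
  summable_of_sum_range_le (fun k => bb_nonneg hq0 _) (sum_range_le hq0 hq1 hn)

lemma bb_tsum_le {q : ℝ} (hq0 : 0 < q) (hq1 : q < 1) {n : ℕ} (hn : 0 < n) :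
    ∑' k, bb q (n+1+k) ≤ aa q n :=
  Summable.tsum_le_of_sum_range_le (bb_summable hq0 hq1 hn) (sum_range_le hq0 hq1 hn)

lemma bb_tsum_lt {q : ℝ} (hq0 : 0 < q) (hq1 : q < 1) {n : ℕ} (hn : 0 < n) :
    ∑' k, bb q (n+1+k) < aa q n := by
  rw [Summable.tsum_eq_zero_add (bb_summable hq0 hq1 hn)]
  have h1 : bb q (n+1+0) < aa q n - aa q (n+1) := by simpa using key_lt hq0 hq1 hn
  have h2 : ∑' k, bb q (n+1+(k+1)) ≤ aa q (n+1) := by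
    have heq : (fun k => bb q (n+1+(k+1))) = fun k => bb q ((n+1)+1+k) := by
      funext k; congr 1; omega
    rw [heq]
    exact bb_tsum_le hq0 hq1 (by omega)
  linarith

/-! ### Structural part -/

abbrev TT (d : ℕ) := {m : Fin d → ℕ // StrictAnti m ∧ ∀ i, 0 < m i}

noncomputable def HH (q : ℝ) (e : ℕ) (m : Fin (e+1) → ℕ) : ℝ :=
  q ^ (m 0) / (qint q (m 0)) ^ 2 * ∏ i : Fin e, (qint q (m i.succ))⁻¹

noncomputable def CC (q : ℝ) (e : ℕ) (m : Fin (e+1) → ℕ) : ℝ :=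
  ∏ i : Fin (e+1), (qint q (m i))⁻¹

lemma cons_strictAnti {n : ℕ} {x : ℕ} {p : Fin (n+1) → ℕ} (hp : StrictAnti p)
    (hx : p 0 < x) : StrictAnti (Fin.cons x p : Fin (n+2) → ℕ) := by
  intro i j hij
  induction j using Fin.cases with
  | zero => exact absurd hij (Fin.not_lt_zero i)
  | succ j' =>
    induction i using Fin.cases with
    | zero =>
      simp only [Fin.cons_zero, Fin.cons_succ]
      exact lt_of_le_of_lt (hp.antitone (Fin.zero_le j')) hx
    | succ i' =>
      simp only [Fin.cons_succ]
      exact hp (by rwa [Fin.succ_lt_succ_iff] at hij)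

def splitEquiv (e : ℕ) : TT (e+2) ≃ Σ p : TT (e+1), {j : ℕ // p.1 0 < j} where
  toFun m := ⟨⟨Fin.tail m.1,
      fun _ _ h => m.2.1 (Fin.succ_lt_succ_iff.mpr h),
      fun i => m.2.2 i.succ⟩,
    ⟨m.1 0, m.2.1 (Fin.succ_pos 0)⟩⟩
  invFun x := ⟨Fin.cons x.2.1 x.1.1,
    cons_strictAnti x.1.2.1 x.2.2,
    fun i => Fin.cases (lt_trans (x.1.2.2 0) x.2.2) x.1.2.2 i⟩
  left_inv m := Subtype.ext (Fin.cons_self_tail m.1)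
  right_inv _ := rfl

def natEquiv (n : ℕ) : ℕ ≃ {j : ℕ // n < j} where
  toFun k := ⟨n+1+k, by omega⟩
  invFun j := j.1 - (n+1)
  left_inv k := by show n+1+k-(n+1) = k; omega
  right_inv j := Subtype.ext (by show n+1+(j.1-(n+1)) = j.1; have := j.2; omega)

lemma H_cons (q : ℝ) (e : ℕ) (j : ℕ) (p : Fin (e+1) → ℕ) :
    HH q (e+1) (Fin.cons j p) = bb q j * CC q e p := by
  simp [HH, CC, bb, Fin.cons_zero, Fin.cons_succ]

lemma aa_mul_CC (q : ℝ) (e : ℕ) (p : Fin (e+1) → ℕ) :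
    aa q (p 0) * CC q e p = HH q e p := by
  rw [CC, Fin.prod_univ_succ, HH, aa]
  ring

lemma CC_pos {q : ℝ} (hq0 : 0 < q) (hq1 : q < 1) {e : ℕ} (p : TT (e+1)) :
    0 < CC q e p.1 :=
  Finset.prod_pos fun i _ => inv_pos.mpr (qint_pos hq0 hq1 (p.2.2 i))

lemma HH_pos {q : ℝ} (hq0 : 0 < q) (hq1 : q < 1) {e : ℕ} (p : TT (e+1)) :
    0 < HH q e p.1 :=
  mul_pos (div_pos (pow_pos hq0 _) (pow_pos (qint_pos hq0 hq1 (p.2.2 0)) 2))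
    (Finset.prod_pos fun i _ => inv_pos.mpr (qint_pos hq0 hq1 (p.2.2 i.succ)))

lemma HH_nonneg {q : ℝ} (hq0 : 0 < q) (hq1 : q < 1) {e : ℕ} (p : TT (e+1)) :
    0 ≤ HH q e p.1 := (HH_pos hq0 hq1 p).le

lemma fiber_summable {q : ℝ} (hq0 : 0 < q) (hq1 : q < 1) {e : ℕ} (p : TT (e+1)) :
    Summable (fun j : {j : ℕ // p.1 0 < j} => HH q (e+1) (Fin.cons j.1 p.1)) := by
  rw [← (natEquiv (p.1 0)).summable_iff]
  have h0 : Summable (fun k : ℕ => bb q (p.1 0 + 1 + k) * CC q e p.1) :=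
    (bb_summable hq0 hq1 (p.2.2 0)).mul_right _
  simpa [Function.comp_def, natEquiv, H_cons] using h0

lemma fiber_tsum_lt {q : ℝ} (hq0 : 0 < q) (hq1 : q < 1) {e : ℕ} (p : TT (e+1)) :
    ∑' j : {j : ℕ // p.1 0 < j}, HH q (e+1) (Fin.cons j.1 p.1) < HH q e p.1 := by
  rw [← (natEquiv (p.1 0)).tsum_eq (fun j : {j : ℕ // p.1 0 < j} => HH q (e+1) (Fin.cons j.1 p.1))]
  have heq : (fun k : ℕ => HH q (e+1) (Fin.cons ((natEquiv (p.1 0)) k).1 p.1))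
      = fun k : ℕ => bb q (p.1 0 + 1 + k) * CC q e p.1 := by
    funext k
    rw [H_cons]
    rfl
  rw [show (fun k : ℕ => HH q (e+1) (Fin.cons ((natEquiv (p.1 0)) k).1 p.1)) = _ from heq]
  rw [tsum_mul_right]
  rw [← aa_mul_CC q e p.1]
  exact mul_lt_mul_of_pos_right (bb_tsum_lt hq0 hq1 (p.2.2 0)) (CC_pos hq0 hq1 p)

lemma consMem {e : ℕ} (p : TT (e+1)) (j : {j : ℕ // p.1 0 < j}) :
    StrictAnti (Fin.cons j.1 p.1 : Fin (e+2) → ℕ)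
      ∧ ∀ i, 0 < (Fin.cons j.1 p.1 : Fin (e+2) → ℕ) i :=
  ⟨cons_strictAnti p.2.1 j.2, fun i => Fin.cases (lt_trans (p.2.2 0) j.2) p.2.2 i⟩

lemma fiber_tsum_nonneg {q : ℝ} (hq0 : 0 < q) (hq1 : q < 1) {e : ℕ} (p : TT (e+1)) :
    0 ≤ ∑' j : {j : ℕ // p.1 0 < j}, HH q (e+1) (Fin.cons j.1 p.1) :=
  tsum_nonneg fun j => le_of_lt <| HH_pos hq0 hq1
    ⟨Fin.cons j.1 p.1, consMem p j⟩

lemma HH_cons_nonneg {q : ℝ} (hq0 : 0 < q) (hq1 : q < 1) {e : ℕ}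
    (x : Σ p : TT (e+1), {j : ℕ // p.1 0 < j}) :
    0 ≤ HH q (e+1) (Fin.cons x.2.1 x.1.1) :=
  HH_nonneg hq0 hq1 ⟨Fin.cons x.2.1 x.1.1, consMem x.1 x.2⟩

def oneEquiv : TT 1 ≃ {j : ℕ // 0 < j} where
  toFun m := ⟨m.1 0, m.2.2 0⟩
  invFun j := ⟨fun _ => j.1,
    fun i k h => absurd (Subsingleton.elim i k ▸ h) (lt_irrefl k),
    fun _ => j.2⟩
  left_inv m := Subtype.ext (funext fun i => by
    have : i = 0 := Subsingleton.elim i 0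
    rw [this])
  right_inv j := rfl

lemma summable_HH {q : ℝ} (hq0 : 0 < q) (hq1 : q < 1) :
    ∀ e : ℕ, Summable (fun m : TT (e+1) => HH q e m.1) := by
  intro e
  induction e with
  | zero =>
    rw [← oneEquiv.symm.summable_iff, ← (natEquiv 0).summable_iff]
    have hgeo : Summable (fun k : ℕ => q ^ (0+1+k)) := by
      refine Summable.congr ((summable_geometric_of_lt_one hq0.le hq1).mul_left q) ?_
      intro k
      rw [show 0+1+k = k+1 from by omega, pow_succ]
      ring
    apply Summable.of_nonneg_of_le ?_ ?_ hgeo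
    · intro k
      exact HH_nonneg hq0 hq1 (oneEquiv.symm ((natEquiv 0) k))
    · intro k
      show HH q 0 ((oneEquiv.symm ((natEquiv 0) k)).1) ≤ q ^ (0+1+k)
      have h1 : 1 ≤ qint q (0+1+k) := one_le_qint hq0 hq1 (by omega)
      have h2 : HH q 0 ((oneEquiv.symm ((natEquiv 0) k)).1)
          = q ^ (0+1+k) / (qint q (0+1+k)) ^ 2 := by
        simp [HH, oneEquiv, natEquiv]
      rw [h2]
      exact div_le_self (pow_nonneg hq0.le _) (by nlinarith)
  | succ e ih =>
    have Sσ : Summable (fun x : Σ p : TT (e+1), {j : ℕ // p.1 0 < j} =>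
        HH q (e+1) (Fin.cons x.2.1 x.1.1)) := by
      rw [summable_sigma_of_nonneg (fun x => HH_cons_nonneg hq0 hq1 x)]
      refine ⟨fun p => fiber_summable hq0 hq1 p, ?_⟩
      apply Summable.of_nonneg_of_le (fun p => fiber_tsum_nonneg hq0 hq1 p)
        (fun p => (fiber_tsum_lt hq0 hq1 p).le) ih
    exact ((splitEquiv e).symm.summable_iff).mp Sσ

lemma tsum_step {q : ℝ} (hq0 : 0 < q) (hq1 : q < 1) (e : ℕ) :
    ∑' m : TT (e+2), HH q (e+1) m.1 < ∑' p : TT (e+1), HH q e p.1 := by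
  have Stsum : Summable (fun p : TT (e+1) =>
      ∑' j : {j : ℕ // p.1 0 < j}, HH q (e+1) (Fin.cons j.1 p.1)) :=
    Summable.of_nonneg_of_le (fun p => fiber_tsum_nonneg hq0 hq1 p)
      (fun p => (fiber_tsum_lt hq0 hq1 p).le) (summable_HH hq0 hq1 e)
  have Sσ : Summable (fun x : Σ p : TT (e+1), {j : ℕ // p.1 0 < j} =>
      HH q (e+1) (Fin.cons x.2.1 x.1.1)) := by
    rw [summable_sigma_of_nonneg (fun x => HH_cons_nonneg hq0 hq1 x)]
    exact ⟨fun p => fiber_summable hq0 hq1 p, Stsum⟩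
  have h1 : ∑' m : TT (e+2), HH q (e+1) m.1
      = ∑' p : TT (e+1), ∑' j : {j : ℕ // p.1 0 < j}, HH q (e+1) (Fin.cons j.1 p.1) := by
    rw [← Equiv.tsum_eq (splitEquiv e).symm (fun m : TT (e+2) => HH q (e+1) m.1)]
    exact Summable.tsum_sigma Sσ
  rw [h1]
  have hp0 : TT (e+1) := ⟨fun i => e + 1 - i.1,
    fun i j h => by
      show e + 1 - j.1 < e + 1 - i.1
      have hij : i.1 < j.1 := h
      have hj : j.1 < e + 1 := j.2
      omega,
    fun i => by
      show 0 < e + 1 - i.1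
      have : i.1 < e + 1 := i.2
      omega⟩
  exact Summable.tsum_lt_tsum (fun p => (fiber_tsum_lt hq0 hq1 p).le)
    (fiber_tsum_lt hq0 hq1 hp0) Stsum (summable_HH hq0 hq1 e)

end AUX

lemma qZeta_eq (q : ℝ) (e : ℕ) :
    qZeta q (Fin.cons 2 (fun _ : Fin e => 1)) 0 = ∑' m : TT (e+1), HH q e m.1 := by
  unfold qZeta
  apply tsum_congr
  intro m
  rw [Fin.prod_univ_succ]
  simp [HH, Fin.cons_zero, Fin.cons_succ]


theorem stmt8 (d : ℕ) (q : ℝ) (hq : q ∈ Set.Ioo (0:ℝ) 1) :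
    qZeta q (Fin.cons 2 (fun _ : Fin (d + 1) => 1)) 0
      < qZeta q (Fin.cons 2 (fun _ : Fin d => 1)) 0 := by
  obtain ⟨hq0, hq1⟩ := hq
  rw [qZeta_eq q (d+1), qZeta_eq q d]
  exact tsum_step hq0 hq1 d
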